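/- Fix x ∈ ℝ^D, ε > 0, n ∈ ℕ and K > 0, and assume the second-moment bound ∫ k(|x−y|²/ε)² dμ(y) ≤ K ε^{n/2}. Then for every bounded measurable u : ℝ^D → ℂ with ‖u‖_∞ > 0 and every δ > 0, ℙ[ | (1/N) Σ_{j=1}^N ε^{−n/2} k(|x−X_j|²/ε) u(X_j) − ∫_{ℝ^D} ε^{−n/2} k(|x−y|²/ε) u(y) dμ(y) | > δ ] ≤ 4 · exp( − N ε^{n/2} δ² / ( 4 ‖u‖_∞ ( K ‖u‖_∞ + ‖k‖_∞ δ / 3 ) ) ). -/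

import Mathlib

open MeasureTheory

open Real Nat


lemma fact_ge (n : ℕ) : (2 * 3 ^ n : ℝ) ≤ ((n + 2)! : ℝ) := by
  induction n with
  | zero => norm_num
  | succ m ih =>
    have h1 : ((m + 1 + 2)! : ℝ) = ((m + 3) : ℝ) * ((m + 2)! : ℝ) := by
      have : m + 1 + 2 = (m + 2) + 1 := by ring
      rw [this, Nat.factorial_succ]; push_cast; ring
    have h3 : (3:ℝ) ≤ (m + 3 : ℝ) := by have := Nat.cast_nonneg (α:=ℝ) m; linarith
    calc (2 * 3 ^ (m+1) : ℝ) = 3 * (2 * 3 ^ m) := by ring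
    _ ≤ (m + 3 : ℝ) * ((m+2)! : ℝ) := by
        apply mul_le_mul h3 ih (by positivity) (by positivity)
    _ = _ := h1.symm

lemma summable_shift (x : ℝ) : Summable (fun n : ℕ => x ^ (n + 2) / ((n + 2)! : ℝ)) :=
  (summable_nat_add_iff 2).2 (Real.summable_pow_div_factorial x)

lemma exp_eq' (x : ℝ) : Real.exp x = 1 + x + ∑' n : ℕ, x ^ (n + 2) / ((n + 2)! : ℝ) := by
  have h0 : Real.exp x = ∑' n : ℕ, x ^ n / (n ! : ℝ) := by
    rw [Real.exp_eq_exp_ℝ, NormedSpace.exp_eq_tsum_div]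
  have hs := Real.summable_pow_div_factorial x
  rw [h0, Summable.tsum_eq_zero_add hs]
  have hs1 : Summable (fun n : ℕ => x ^ (n+1) / ((n+1)! : ℝ)) :=
    (summable_nat_add_iff 1).2 hs
  rw [Summable.tsum_eq_zero_add hs1]
  norm_num [add_assoc]

lemma F_nonneg' {x : ℝ} (hx : 0 ≤ x) : 0 ≤ ∑' n : ℕ, x ^ (n + 2) / ((n + 2)! : ℝ) :=
  tsum_nonneg fun n => by positivity

lemma F_cmp' {x c : ℝ} (h : |x| ≤ c) :
    c ^ 2 * ∑' n : ℕ, x ^ (n + 2) / ((n + 2)! : ℝ)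
      ≤ x ^ 2 * ∑' n : ℕ, c ^ (n + 2) / ((n + 2)! : ℝ) := by
  have hc : 0 ≤ c := le_trans (abs_nonneg x) h
  rw [← tsum_mul_left, ← tsum_mul_left]
  apply Summable.tsum_le_tsum _ ((summable_shift x).mul_left _) ((summable_shift c).mul_left _)
  intro n
  have key : c ^ 2 * x ^ (n + 2) ≤ x ^ 2 * c ^ (n + 2) := by
    have h1 : x ^ (n + 2) ≤ |x| ^ (n + 2) := le_abs_self _ |>.trans_eq (abs_pow x (n+2))
    have h2 : |x| ^ (n + 2) = |x| ^ 2 * |x| ^ n := by ring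
    have h3 : |x| ^ n ≤ c ^ n := pow_le_pow_left₀ (abs_nonneg x) h n
    have h4 : x ^ (n + 2) ≤ x ^ 2 * c ^ n := by
      rw [← sq_abs x]
      calc x ^ (n+2) ≤ |x| ^ (n+2) := h1
      _ = |x| ^ 2 * |x| ^ n := h2
      _ ≤ |x| ^ 2 * c ^ n := by
          apply mul_le_mul_of_nonneg_left h3 (by positivity)
    calc c ^ 2 * x ^ (n + 2) ≤ c ^ 2 * (x ^ 2 * c ^ n) := by
          apply mul_le_mul_of_nonneg_left h4 (by positivity)
    _ = x ^ 2 * c ^ (n + 2) := by ring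
  have hfact : (0:ℝ) < ((n+2)! : ℝ) := by positivity
  rw [div_eq_mul_inv, div_eq_mul_inv, ← mul_assoc, ← mul_assoc]
  exact mul_le_mul_of_nonneg_right key (by positivity)

lemma F_le' {x : ℝ} (hx : 0 ≤ x) (hx3 : x < 3) :
    ∑' n : ℕ, x ^ (n + 2) / ((n + 2)! : ℝ) ≤ x ^ 2 / (2 * (1 - x / 3)) := by
  have hlt : x / 3 < 1 := by linarith
  have hge : (0:ℝ) ≤ x / 3 := by linarith
  have hsum_geo : Summable (fun n : ℕ => x ^ 2 / 2 * (x / 3) ^ n) :=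
    (summable_geometric_of_lt_one hge hlt).mul_left _
  have step : ∑' n : ℕ, x ^ (n + 2) / ((n + 2)! : ℝ)
      ≤ ∑' n : ℕ, x ^ 2 / 2 * (x / 3) ^ n := by
    apply Summable.tsum_le_tsum _ (summable_shift x) hsum_geo
    intro n
    have h1 : x ^ (n + 2) / ((n+2)! : ℝ) ≤ x ^ (n + 2) / (2 * 3 ^ n) := by
      apply div_le_div_of_nonneg_left (by positivity) (by positivity) (fact_ge n)
    refine h1.trans_eq ?_
    rw [div_pow]
    field_simp
    ring
  refine step.trans_eq ?_
  rw [tsum_mul_left, tsum_geometric_of_lt_one hge hlt]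
  field_simp


noncomputable def Fser (x : ℝ) : ℝ := ∑' n : ℕ, x ^ (n + 2) / ((n + 2)! : ℝ)

lemma exp_eq (x : ℝ) : Real.exp x = 1 + x + Fser x := exp_eq' x
lemma F_nonneg {x : ℝ} (hx : 0 ≤ x) : 0 ≤ Fser x := F_nonneg' hx
lemma F_cmp {x c : ℝ} (h : |x| ≤ c) : c ^ 2 * Fser x ≤ x ^ 2 * Fser c := F_cmp' h
lemma F_le {x : ℝ} (hx : 0 ≤ x) (hx3 : x < 3) : Fser x ≤ x ^ 2 / (2 * (1 - x / 3)) := F_le' hx hx3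

lemma F_zero : Fser 0 = 0 := by
  unfold Fser
  convert tsum_zero with n
  simp

lemma integrable_of_bdd {Ω : Type*} [MeasurableSpace Ω] {ℙ : Measure Ω} [IsFiniteMeasure ℙ]
    {f : Ω → ℝ} (hf : Measurable f) {C : ℝ} (h : ∀ ω, |f ω| ≤ C) : Integrable f ℙ :=
  ⟨hf.aestronglyMeasurable,
    HasFiniteIntegral.of_bounded (C := C) (ae_of_all _ (fun ω => by simpa using h ω))⟩

lemma mgf_le_of_bdd {Ω : Type*} [MeasurableSpace Ω] (ℙ : Measure Ω) [IsProbabilityMeasure ℙ]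
    (Y : Ω → ℝ) (hY : Measurable Y) (b : ℝ) (hb : 0 < b) (hYb : ∀ ω, |Y ω| ≤ b)
    (l : ℝ) (hl : 0 ≤ l) :
    ProbabilityTheory.mgf Y ℙ l ≤
      Real.exp (l * (∫ ω, Y ω ∂ℙ) + (∫ ω, (Y ω) ^ 2 ∂ℙ) * Fser (l * b) / b ^ 2) := by
  rcases hl.eq_or_lt with rfl | hl
  · simp [ProbabilityTheory.mgf_zero, F_zero]
  set C : ℝ := Fser (l * b) / b ^ 2 with hC
  have hC0 : 0 ≤ C := div_nonneg (F_nonneg (by positivity)) (by positivity)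
  have hpt : ∀ ω, Real.exp (l * Y ω) ≤ 1 + l * Y ω + (Y ω) ^ 2 * C := by
    intro ω
    have h1 : |l * Y ω| ≤ l * b := by
      rw [abs_mul, abs_of_pos hl]
      exact mul_le_mul_of_nonneg_left (hYb ω) hl.le
    have h2 := F_cmp h1
    have h3 : Fser (l * Y ω) ≤ (Y ω) ^ 2 * C := by
      rw [hC, ← mul_div_assoc, le_div_iff₀ (by positivity : (0:ℝ) < b ^ 2)]
      nlinarith [h2, mul_pos hl hl]
    rw [exp_eq (l * Y ω)]
    linarith
  have hintY : Integrable Y ℙ := integrable_of_bdd hY hYb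
  have hintY2 : Integrable (fun ω => (Y ω) ^ 2) ℙ := by
    apply integrable_of_bdd (hY.pow_const 2)
    intro ω
    calc |(Y ω) ^ 2| = |Y ω| ^ 2 := by rw [abs_pow]
    _ ≤ b ^ 2 := pow_le_pow_left₀ (abs_nonneg _) (hYb ω) 2
  have hintExp : Integrable (fun ω => Real.exp (l * Y ω)) ℙ := by
    apply integrable_of_bdd ((hY.const_mul l).exp)
    intro ω
    rw [abs_of_pos (exp_pos _), Real.exp_le_exp]
    calc l * Y ω ≤ l * |Y ω| := by nlinarith [le_abs_self (Y ω)]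
    _ ≤ l * b := mul_le_mul_of_nonneg_left (hYb ω) hl.le
  have hint2 : Integrable (fun ω => 1 + l * Y ω + (Y ω) ^ 2 * C) ℙ :=
    ((integrable_const 1).add (hintY.const_mul l)).add (hintY2.mul_const C)
  have step : ProbabilityTheory.mgf Y ℙ l ≤ ∫ ω, (1 + l * Y ω + (Y ω) ^ 2 * C) ∂ℙ :=
    integral_mono hintExp hint2 hpt
  have hval : ∫ ω, (1 + l * Y ω + (Y ω) ^ 2 * C) ∂ℙ
      = 1 + l * (∫ ω, Y ω ∂ℙ) + (∫ ω, (Y ω) ^ 2 ∂ℙ) * C := by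
    have h1 : ∫ ω, (1 + l * Y ω + (Y ω) ^ 2 * C) ∂ℙ
        = (∫ ω, (1 + l * Y ω) ∂ℙ) + ∫ ω, (Y ω) ^ 2 * C ∂ℙ :=
      integral_add ((integrable_const 1).add (hintY.const_mul l)) (hintY2.mul_const C)
    have h2 : ∫ ω, (1 + l * Y ω) ∂ℙ = (∫ _ω, (1:ℝ) ∂ℙ) + ∫ ω, l * Y ω ∂ℙ :=
      integral_add (integrable_const 1) (hintY.const_mul l)
    rw [h1, h2, integral_const, integral_const_mul, integral_mul_const]
    simp
  rw [hval] at step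
  refine step.trans ?_
  have := Real.add_one_le_exp (l * (∫ ω, Y ω ∂ℙ) + (∫ ω, (Y ω) ^ 2 ∂ℙ) * C)
  have heq : (∫ ω, (Y ω) ^ 2 ∂ℙ) * C = (∫ ω, (Y ω) ^ 2 ∂ℙ) * Fser (l * b) / b ^ 2 := by
    rw [hC]; ring
  linarith [heq ▸ this]

lemma bernstein_one_side {Ω : Type*} [MeasurableSpace Ω] (ℙ : Measure Ω) [IsProbabilityMeasure ℙ]
    (N : ℕ) (Y : Fin N → Ω → ℝ)
    (hmeas : ∀ j, Measurable (Y j))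
    (hindep : ProbabilityTheory.iIndepFun Y ℙ)
    (b : ℝ) (hb : 0 < b) (hYb : ∀ j ω, |Y j ω| ≤ b)
    (m : ℝ) (hm : ∀ j, ∫ ω, Y j ω ∂ℙ = m)
    (v : ℝ) (hv : 0 < v) (hYv : ∀ j, ∫ ω, (Y j ω) ^ 2 ∂ℙ ≤ v)
    (t : ℝ) (ht : 0 < t) :
    ℙ {ω | N * m + N * t ≤ ∑ j, Y j ω}
      ≤ ENNReal.ofReal (Real.exp (-(N * t ^ 2) / (2 * (v + b * t / 3)))) := by
  set s : ℝ := v + b * t / 3 with hs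
  have hs0 : 0 < s := by positivity
  set l : ℝ := t / s with hldef
  have hl : 0 < l := by positivity
  -- integrability of exp (l * Y j)
  have hint : ∀ j, Integrable (fun ω => Real.exp (l * Y j ω)) ℙ := by
    intro j
    apply integrable_of_bdd ((hmeas j).const_mul l).exp
    intro ω
    rw [abs_of_pos (Real.exp_pos _), Real.exp_le_exp]
    calc l * Y j ω ≤ l * |Y j ω| := by nlinarith [le_abs_self (Y j ω)]
    _ ≤ l * b := mul_le_mul_of_nonneg_left (hYb j ω) hl.le
  have hintsum : Integrable (fun ω => Real.exp (l * (∑ j, Y j) ω)) ℙ :=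
    hindep.integrable_exp_mul_sum hmeas (fun i _ => hint i)
  -- Chernoff
  have hch := ProbabilityTheory.measure_ge_le_exp_mul_mgf (X := ∑ j, Y j) (μ := ℙ)
    (N * m + N * t) hl.le hintsum
  -- bound the mgf
  have hmgf : ProbabilityTheory.mgf (∑ j, Y j) ℙ l
      ≤ Real.exp (N * (l * m + v * Fser (l * b) / b ^ 2)) := by
    rw [ProbabilityTheory.iIndepFun.mgf_sum hindep hmeas]
    have hone : ∀ j : Fin N, ProbabilityTheory.mgf (Y j) ℙ l
        ≤ Real.exp (l * m + v * Fser (l * b) / b ^ 2) := by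
      intro j
      refine (mgf_le_of_bdd ℙ (Y j) (hmeas j) b hb (hYb j) l hl.le).trans ?_
      rw [Real.exp_le_exp, hm j]
      have hF : 0 ≤ Fser (l * b) := F_nonneg (by positivity)
      have := hYv j
      have hb2 : (0:ℝ) < b ^ 2 := by positivity
      apply _root_.add_le_add le_rfl
      gcongr
    calc ∏ j : Fin N, ProbabilityTheory.mgf (Y j) ℙ l
        ≤ ∏ _j : Fin N, Real.exp (l * m + v * Fser (l * b) / b ^ 2) :=
          Finset.prod_le_prod (fun j _ => ProbabilityTheory.mgf_nonneg) (fun j _ => hone j)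
    _ = Real.exp (N * (l * m + v * Fser (l * b) / b ^ 2)) := by
        rw [Finset.prod_const, ← Real.exp_nat_mul]
        simp
  -- combine
  have hlb3 : l * b < 3 := by
    rw [hldef, div_mul_eq_mul_div, div_lt_iff₀ hs0]
    rw [hs]; nlinarith
  have key3 : 1 - l * b / 3 = v / s := by
    rw [hldef]; field_simp; rw [hs]; ring
  have hF2 : Fser (l * b) ≤ (l * b) ^ 2 / (2 * (v / s)) := by
    rw [← key3]; exact F_le (by positivity) hlb3
  have hA : v * Fser (l * b) / b ^ 2 ≤ t ^ 2 / (2 * s) := by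
    calc v * Fser (l * b) / b ^ 2 ≤ v * ((l * b) ^ 2 / (2 * (v / s))) / b ^ 2 := by
          gcongr
    _ = t ^ 2 / (2 * s) := by rw [hldef]; field_simp
  have hmain : -l * t + v * Fser (l * b) / b ^ 2 ≤ -(t ^ 2) / (2 * s) := by
    have hlt : l * t = t ^ 2 / s := by rw [hldef]; field_simp
    have h2s : (0:ℝ) < 2 * s := by positivity
    have : t ^ 2 / (2 * s) * 2 = t ^ 2 / s := by field_simp
    rw [neg_div, neg_mul] at *
    linarith [hA]
  have hcomb : (ℙ {ω | N * m + N * t ≤ (∑ j, Y j) ω}).toReal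
      ≤ Real.exp (-(N * t ^ 2) / (2 * s)) := by
    refine hch.trans ?_
    refine (mul_le_mul_of_nonneg_left hmgf (Real.exp_nonneg _)).trans ?_
    rw [← Real.exp_add, Real.exp_le_exp]
    calc -l * (N * m + N * t) + N * (l * m + v * Fser (l * b) / b ^ 2)
        = (N : ℝ) * (-l * t + v * Fser (l * b) / b ^ 2) := by ring
    _ ≤ (N : ℝ) * (-(t ^ 2) / (2 * s)) := mul_le_mul_of_nonneg_left hmain (Nat.cast_nonneg N)
    _ = -(N * t ^ 2) / (2 * s) := by ring
  rw [ENNReal.le_ofReal_iff_toReal_le (measure_ne_top ℙ _) (Real.exp_nonneg _)]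
  simpa [Finset.sum_apply] using hcomb

lemma bernstein_two_side {Ω : Type*} [MeasurableSpace Ω] (ℙ : Measure Ω) [IsProbabilityMeasure ℙ]
    (N : ℕ) (Y : Fin N → Ω → ℝ)
    (hmeas : ∀ j, Measurable (Y j))
    (hindep : ProbabilityTheory.iIndepFun Y ℙ)
    (b : ℝ) (hb : 0 < b) (hYb : ∀ j ω, |Y j ω| ≤ b)
    (m : ℝ) (hm : ∀ j, ∫ ω, Y j ω ∂ℙ = m)
    (v : ℝ) (hv : 0 < v) (hYv : ∀ j, ∫ ω, (Y j ω) ^ 2 ∂ℙ ≤ v)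
    (t : ℝ) (ht : 0 < t) :
    ℙ {ω | N * t ≤ |(∑ j, Y j ω) - N * m|}
      ≤ ENNReal.ofReal (2 * Real.exp (-(N * t ^ 2) / (2 * (v + b * t / 3)))) := by
  have hup := bernstein_one_side ℙ N Y hmeas hindep b hb hYb m hm v hv hYv t ht
  have hdn := bernstein_one_side ℙ N (fun j => -(Y j)) (fun j => (hmeas j).neg)
      (hindep.comp (fun _ => Neg.neg) (fun _ => measurable_neg)) b hb
      (fun j ω => by simpa using hYb j ω) (-m) (fun j => by simp [integral_neg, hm j])
      v hv (fun j => by simpa using hYv j) t ht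
  have hsub : {ω | (N:ℝ) * t ≤ |(∑ j, Y j ω) - N * m|}
      ⊆ {ω | (N:ℝ) * m + N * t ≤ ∑ j, Y j ω}
        ∪ {ω | (N:ℝ) * (-m) + N * t ≤ ∑ j, (-(Y j)) ω} := by
    intro ω hω
    simp only [Set.mem_setOf_eq, Set.mem_union, Pi.neg_apply, Finset.sum_neg_distrib] at *
    rcases le_abs.1 hω with h | h
    · left; linarith
    · right; linarith
  calc ℙ {ω | (N:ℝ) * t ≤ |(∑ j, Y j ω) - N * m|}
      ≤ ℙ ({ω | (N:ℝ) * m + N * t ≤ ∑ j, Y j ω}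
          ∪ {ω | (N:ℝ) * (-m) + N * t ≤ ∑ j, (-(Y j)) ω}) := measure_mono hsub
  _ ≤ ℙ {ω | (N:ℝ) * m + N * t ≤ ∑ j, Y j ω}
      + ℙ {ω | (N:ℝ) * (-m) + N * t ≤ ∑ j, (-(Y j)) ω} := measure_union_le _ _
  _ ≤ ENNReal.ofReal (Real.exp (-(N * t ^ 2) / (2 * (v + b * t / 3))))
      + ENNReal.ofReal (Real.exp (-(N * t ^ 2) / (2 * (v + b * t / 3)))) := add_le_add hup hdn
  _ = ENNReal.ofReal (2 * Real.exp (-(N * t ^ 2) / (2 * (v + b * t / 3)))) := by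
      rw [← ENNReal.ofReal_add (Real.exp_nonneg _) (Real.exp_nonneg _)]; ring_nf

lemma integrable_of_bdd' {Ω : Type*} {E : Type*} [MeasurableSpace Ω] {ℙ : Measure Ω}
    [IsFiniteMeasure ℙ] [NormedAddCommGroup E]
    {f : Ω → E} (hf : AEStronglyMeasurable f ℙ) {C : ℝ} (h : ∀ ω, ‖f ω‖ ≤ C) : Integrable f ℙ :=
  ⟨hf, HasFiniteIntegral.of_bounded (C := C) (ae_of_all _ h)⟩

set_option maxHeartbeats 2000000 in
/-- Bernstein-type kernel-sum consistency lemma: the empirical average of the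
rescaled kernel against a bounded function concentrates around its mean. -/
theorem kernel_sum_consistency
    {Ω : Type*} [MeasurableSpace Ω] (ℙ : Measure Ω) [IsProbabilityMeasure ℙ]
    {D : ℕ} (μ : Measure (EuclideanSpace ℝ (Fin D))) [IsProbabilityMeasure μ]
    (N : ℕ) (hN : 0 < N)
    (X : Fin N → Ω → EuclideanSpace ℝ (Fin D))
    (hX_meas : ∀ j, Measurable (X j))
    (hX_indep : ProbabilityTheory.iIndepFun X ℙ)
    (hX_law : ∀ j, Measure.map (X j) ℙ = μ)
    (k : ℝ → ℝ) (hk_meas : Measurable k) (hk_nonneg : ∀ t, 0 ≤ k t)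
    (hk_bdd : BddAbove (Set.range k))
    (x : EuclideanSpace ℝ (Fin D)) (ε : ℝ) (hε : 0 < ε) (n : ℕ)
    (K : ℝ) (hK : 0 < K)
    (hmom : ∫ y, (k (‖x - y‖ ^ 2 / ε)) ^ 2 ∂μ ≤ K * ε ^ ((n : ℝ) / 2))
    (u : EuclideanSpace ℝ (Fin D) → ℂ) (hu_meas : Measurable u)
    (hu_bdd : BddAbove (Set.range fun y => ‖u y‖))
    (hu_pos : 0 < ⨆ y, ‖u y‖)
    (δ : ℝ) (hδ : 0 < δ) :
    ℙ {ω | δ <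
        ‖(1 / (N : ℂ)) * ∑ j, ((ε ^ (-(n : ℝ) / 2) * k (‖x - X j ω‖ ^ 2 / ε) : ℝ) : ℂ)
            * u (X j ω)
          - ∫ y, ((ε ^ (-(n : ℝ) / 2) * k (‖x - y‖ ^ 2 / ε) : ℝ) : ℂ) * u y ∂μ‖}
      ≤ ENNReal.ofReal (4 * Real.exp
          (-(N * ε ^ ((n : ℝ) / 2) * δ ^ 2) /
            (4 * (⨆ y, ‖u y‖) * (K * (⨆ y, ‖u y‖) + (⨆ t, k t) * δ / 3)))) := by
  classical
  set M := ⨆ y, ‖u y‖ with hMdef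
  set Kk := ⨆ t, k t with hKkdef
  have hMle : ∀ y, ‖u y‖ ≤ M := fun y => le_ciSup hu_bdd y
  have hKkle : ∀ s, k s ≤ Kk := fun s => le_ciSup hk_bdd s
  have hKk0 : 0 ≤ Kk := le_trans (hk_nonneg 0) (hKkle 0)
  rcases eq_or_lt_of_le hKk0 with hKkz | hKkpos
  · -- kernel is identically zero
    have hk0 : ∀ s, k s = 0 := fun s => le_antisymm (hKkz ▸ hKkle s) (hk_nonneg s)
    have hempty : {ω | δ <
        ‖(1 / (N : ℂ)) * ∑ j, ((ε ^ (-(n : ℝ) / 2) * k (‖x - X j ω‖ ^ 2 / ε) : ℝ) : ℂ)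
            * u (X j ω)
          - ∫ y, ((ε ^ (-(n : ℝ) / 2) * k (‖x - y‖ ^ 2 / ε) : ℝ) : ℂ) * u y ∂μ‖} = ∅ := by
      ext ω
      simp only [Set.mem_setOf_eq, Set.mem_empty_iff_false, iff_false, not_lt, hk0, mul_zero,
        Complex.ofReal_zero, zero_mul, Finset.sum_const_zero, integral_zero, sub_zero,
        norm_zero]
      exact hδ.le
    rw [hempty]
    simp
  -- main case
  set r : ℝ := ε ^ (-(n : ℝ) / 2) with hrdef
  have hr0 : 0 < r := Real.rpow_pos_of_pos hε _
  have hε2 : (0:ℝ) < ε ^ ((n : ℝ) / 2) := Real.rpow_pos_of_pos hε _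
  have hrε : r * ε ^ ((n : ℝ) / 2) = 1 := by
    rw [hrdef, ← Real.rpow_add hε, show (-(n:ℝ)/2 + (n:ℝ)/2) = 0 by ring, Real.rpow_zero]
  set c : EuclideanSpace ℝ (Fin D) → ℝ := fun y => r * k (‖x - y‖ ^ 2 / ε) with hcdef
  have hq_meas : Measurable fun y : EuclideanSpace ℝ (Fin D) => ‖x - y‖ ^ 2 / ε :=
    (((continuous_const.sub continuous_id).norm.pow 2).div_const ε).measurable
  have hc_meas : Measurable c := (hk_meas.comp hq_meas).const_mul r
  have hc_nonneg : ∀ y, 0 ≤ c y := fun y => mul_nonneg hr0.le (hk_nonneg _)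
  have hc_le : ∀ y, c y ≤ r * Kk := fun y => mul_le_mul_of_nonneg_left (hKkle _) hr0.le
  -- real and imaginary parts
  set gre : EuclideanSpace ℝ (Fin D) → ℝ := fun y => c y * (u y).re with hgre
  set gim : EuclideanSpace ℝ (Fin D) → ℝ := fun y => c y * (u y).im with hgim
  have hgre_meas : Measurable gre := hc_meas.mul (Complex.measurable_re.comp hu_meas)
  have hgim_meas : Measurable gim := hc_meas.mul (Complex.measurable_im.comp hu_meas)
  set b : ℝ := r * Kk * M with hbdef
  have hb : 0 < b := by positivity
  have hgre_bdd : ∀ y, |gre y| ≤ b := by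
    intro y
    rw [hgre, abs_mul, abs_of_nonneg (hc_nonneg y)]
    calc c y * |(u y).re| ≤ (r * Kk) * ‖u y‖ := by
          apply mul_le_mul (hc_le y) _ (abs_nonneg _) (by positivity)
          exact (Complex.abs_re_le_norm _)
    _ ≤ b := by rw [hbdef]; exact mul_le_mul_of_nonneg_left (hMle y) (by positivity)
  have hgim_bdd : ∀ y, |gim y| ≤ b := by
    intro y
    rw [hgim, abs_mul, abs_of_nonneg (hc_nonneg y)]
    calc c y * |(u y).im| ≤ (r * Kk) * ‖u y‖ := by
          apply mul_le_mul (hc_le y) _ (abs_nonneg _) (by positivity)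
          exact (Complex.abs_im_le_norm _)
    _ ≤ b := by rw [hbdef]; exact mul_le_mul_of_nonneg_left (hMle y) (by positivity)
  -- second moment bound over μ
  set v : ℝ := K * M ^ 2 * r with hvdef
  have hv : 0 < v := by positivity
  have hr2 : r ^ 2 * (K * ε ^ ((n : ℝ) / 2)) = K * r := by
    have : r ^ 2 * ε ^ ((n : ℝ) / 2) = r := by
      calc r ^ 2 * ε ^ ((n : ℝ) / 2) = r * (r * ε ^ ((n : ℝ) / 2)) := by ring
      _ = r := by rw [hrε, mul_one]
    calc r ^ 2 * (K * ε ^ ((n : ℝ) / 2)) = K * (r ^ 2 * ε ^ ((n : ℝ) / 2)) := by ring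
    _ = K * r := by rw [this]
  have hint_c2 : Integrable (fun y => (c y) ^ 2) μ := by
    apply integrable_of_bdd' (hc_meas.pow_const 2).aestronglyMeasurable (C := (r * Kk) ^ 2)
    intro y
    rw [Real.norm_eq_abs, abs_of_nonneg (by positivity)]
    exact pow_le_pow_left₀ (hc_nonneg y) (hc_le y) 2
  have hmom_c : ∫ y, (c y) ^ 2 ∂μ ≤ K * r := by
    have : ∀ y, (c y) ^ 2 = r ^ 2 * (k (‖x - y‖ ^ 2 / ε)) ^ 2 := by
      intro y; rw [hcdef]; ring
    calc ∫ y, (c y) ^ 2 ∂μ = r ^ 2 * ∫ y, (k (‖x - y‖ ^ 2 / ε)) ^ 2 ∂μ := by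
          simp_rw [this]; rw [integral_const_mul]
    _ ≤ r ^ 2 * (K * ε ^ ((n : ℝ) / 2)) := by
          apply mul_le_mul_of_nonneg_left hmom (by positivity)
    _ = K * r := hr2
  have hmom_re : ∫ y, (gre y) ^ 2 ∂μ ≤ v := by
    have hpt : ∀ y, (gre y) ^ 2 ≤ (c y) ^ 2 * M ^ 2 := by
      intro y
      rw [hgre, mul_pow]
      apply mul_le_mul_of_nonneg_left _ (by positivity)
      have h1 : |(u y).re| ≤ M := ((Complex.abs_re_le_norm _).trans
        le_rfl).trans (hMle y)
      calc (u y).re ^ 2 = |(u y).re| ^ 2 := (sq_abs _).symm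
      _ ≤ M ^ 2 := pow_le_pow_left₀ (abs_nonneg _) h1 2
    have hint1 : Integrable (fun y => (gre y) ^ 2) μ := by
      apply integrable_of_bdd' (hgre_meas.pow_const 2).aestronglyMeasurable (C := b ^ 2)
      intro y
      rw [Real.norm_eq_abs, abs_of_nonneg (by positivity), ← sq_abs]
      exact pow_le_pow_left₀ (abs_nonneg _) (hgre_bdd y) 2
    calc ∫ y, (gre y) ^ 2 ∂μ ≤ ∫ y, (c y) ^ 2 * M ^ 2 ∂μ :=
          integral_mono hint1 (hint_c2.mul_const _) hpt
    _ = (∫ y, (c y) ^ 2 ∂μ) * M ^ 2 := integral_mul_const _ _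
    _ ≤ (K * r) * M ^ 2 := mul_le_mul_of_nonneg_right hmom_c (by positivity)
    _ = v := by rw [hvdef]; ring
  have hmom_im : ∫ y, (gim y) ^ 2 ∂μ ≤ v := by
    have hpt : ∀ y, (gim y) ^ 2 ≤ (c y) ^ 2 * M ^ 2 := by
      intro y
      rw [hgim, mul_pow]
      apply mul_le_mul_of_nonneg_left _ (by positivity)
      have h1 : |(u y).im| ≤ M := ((Complex.abs_im_le_norm _).trans
        le_rfl).trans (hMle y)
      calc (u y).im ^ 2 = |(u y).im| ^ 2 := (sq_abs _).symm
      _ ≤ M ^ 2 := pow_le_pow_left₀ (abs_nonneg _) h1 2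
    have hint1 : Integrable (fun y => (gim y) ^ 2) μ := by
      apply integrable_of_bdd' (hgim_meas.pow_const 2).aestronglyMeasurable (C := b ^ 2)
      intro y
      rw [Real.norm_eq_abs, abs_of_nonneg (by positivity), ← sq_abs]
      exact pow_le_pow_left₀ (abs_nonneg _) (hgim_bdd y) 2
    calc ∫ y, (gim y) ^ 2 ∂μ ≤ ∫ y, (c y) ^ 2 * M ^ 2 ∂μ :=
          integral_mono hint1 (hint_c2.mul_const _) hpt
    _ = (∫ y, (c y) ^ 2 ∂μ) * M ^ 2 := integral_mul_const _ _
    _ ≤ (K * r) * M ^ 2 := mul_le_mul_of_nonneg_right hmom_c (by positivity)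
    _ = v := by rw [hvdef]; ring
  -- means
  set mre : ℝ := ∫ y, gre y ∂μ with hmre
  set mim : ℝ := ∫ y, gim y ∂μ with hmim
  have hlaw_re : ∀ j, ∫ ω, gre (X j ω) ∂ℙ = mre := by
    intro j
    rw [hmre, ← hX_law j,
      integral_map (hX_meas j).aemeasurable hgre_meas.aestronglyMeasurable]
  have hlaw_im : ∀ j, ∫ ω, gim (X j ω) ∂ℙ = mim := by
    intro j
    rw [hmim, ← hX_law j,
      integral_map (hX_meas j).aemeasurable hgim_meas.aestronglyMeasurable]
  have hlaw_re2 : ∀ j, ∫ ω, (gre (X j ω)) ^ 2 ∂ℙ ≤ v := by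
    intro j
    have : ∫ ω, (gre (X j ω)) ^ 2 ∂ℙ = ∫ y, (gre y) ^ 2 ∂μ := by
      rw [← hX_law j,
        integral_map (hX_meas j).aemeasurable (hgre_meas.pow_const 2).aestronglyMeasurable]
    rw [this]; exact hmom_re
  have hlaw_im2 : ∀ j, ∫ ω, (gim (X j ω)) ^ 2 ∂ℙ ≤ v := by
    intro j
    have : ∫ ω, (gim (X j ω)) ^ 2 ∂ℙ = ∫ y, (gim y) ^ 2 ∂μ := by
      rw [← hX_law j,
        integral_map (hX_meas j).aemeasurable (hgim_meas.pow_const 2).aestronglyMeasurable]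
    rw [this]; exact hmom_im
  -- Bernstein bounds for real and imaginary parts
  have hsqrt2 : (0:ℝ) < Real.sqrt 2 := by positivity
  set t : ℝ := δ / Real.sqrt 2 with htdef
  have ht : 0 < t := by positivity
  have hre := bernstein_two_side ℙ N (fun j => gre ∘ X j)
      (fun j => hgre_meas.comp (hX_meas j))
      (hX_indep.comp (fun _ => gre) (fun _ => hgre_meas)) b hb
      (fun j ω => hgre_bdd _) mre (fun j => hlaw_re j) v hv (fun j => hlaw_re2 j) t ht
  have him := bernstein_two_side ℙ N (fun j => gim ∘ X j)
      (fun j => hgim_meas.comp (hX_meas j))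
      (hX_indep.comp (fun _ => gim) (fun _ => hgim_meas)) b hb
      (fun j ω => hgim_bdd _) mim (fun j => hlaw_im j) v hv (fun j => hlaw_im2 j) t ht
  -- the complex-valued objects
  set W : EuclideanSpace ℝ (Fin D) → ℂ := fun y => ((c y : ℝ) : ℂ) * u y with hWdef
  have hW_meas : Measurable W := (Complex.measurable_ofReal.comp hc_meas).mul hu_meas
  have hintW : Integrable W μ := by
    apply integrable_of_bdd' hW_meas.aestronglyMeasurable (C := b)
    intro y
    rw [hWdef]
    calc ‖((c y : ℝ) : ℂ) * u y‖ = |c y| * ‖u y‖ := by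
          rw [norm_mul, Complex.norm_real, Real.norm_eq_abs]
    _ ≤ (r * Kk) * M := by
          apply mul_le_mul _ (hMle y) (norm_nonneg _) (by positivity)
          rw [abs_of_nonneg (hc_nonneg y)]; exact hc_le y
    _ = b := hbdef.symm
  have hWre : ∀ y, (W y).re = gre y := fun y => Complex.re_ofReal_mul _ _
  have hWim : ∀ y, (W y).im = gim y := fun y => Complex.im_ofReal_mul _ _
  have hIre : (∫ y, W y ∂μ).re = mre := by
    have h := integral_re hintW
    simp only [RCLike.re_to_complex] at h
    rw [← h, hmre]
    congr 1; ext y; rw [hWre]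
  have hIim : (∫ y, W y ∂μ).im = mim := by
    have h := integral_im hintW
    simp only [RCLike.im_to_complex] at h
    rw [← h, hmim]
    congr 1; ext y; rw [hWim]
  have hNne : ((N : ℝ)) ≠ 0 := by positivity
  -- inclusion of events
  have hsub : {ω | δ < ‖(1 / (N : ℂ)) * (∑ j, W (X j ω)) - ∫ y, W y ∂μ‖}
      ⊆ {ω | (N:ℝ) * t ≤ |(∑ j, (gre ∘ X j) ω) - N * mre|}
        ∪ {ω | (N:ℝ) * t ≤ |(∑ j, (gim ∘ X j) ω) - N * mim|} := by
    intro ω hω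
    simp only [Set.mem_setOf_eq] at hω
    simp only [Set.mem_union, Set.mem_setOf_eq, Function.comp_apply]
    by_contra hcon
    push_neg at hcon
    obtain ⟨h1, h2⟩ := hcon
    set Z : ℂ := (1 / (N : ℂ)) * (∑ j, W (X j ω)) - ∫ y, W y ∂μ with hZdef
    have hSre : (∑ j, W (X j ω)).re = ∑ j, gre (X j ω) := by
      rw [Complex.re_sum]
      exact Finset.sum_congr rfl (fun j _ => hWre _)
    have hSim : (∑ j, W (X j ω)).im = ∑ j, gim (X j ω) := by
      rw [Complex.im_sum]
      exact Finset.sum_congr rfl (fun j _ => hWim _)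
    have h1N : (1 / (N : ℂ)) = (((N : ℝ)⁻¹ : ℝ) : ℂ) := by push_cast; ring
    have hZre : Z.re = ((∑ j, gre (X j ω)) - N * mre) / N := by
      rw [hZdef, Complex.sub_re, h1N, Complex.re_ofReal_mul, hSre, hIre]
      field_simp
    have hZim : Z.im = ((∑ j, gim (X j ω)) - N * mim) / N := by
      rw [hZdef, Complex.sub_im, h1N, Complex.im_ofReal_mul, hSim, hIim]
      field_simp
    have hNpos : (0:ℝ) < N := by positivity
    have hre_lt : |Z.re| < t := by
      rw [hZre, abs_div, abs_of_pos hNpos, div_lt_iff₀ hNpos]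
      linarith [h1]
    have him_lt : |Z.im| < t := by
      rw [hZim, abs_div, abs_of_pos hNpos, div_lt_iff₀ hNpos]
      linarith [h2]
    have hnormsq : ‖Z‖ ^ 2 = Z.re ^ 2 + Z.im ^ 2 := by
      rw [Complex.sq_norm, Complex.normSq_apply]; ring
    have ht2 : t ^ 2 = δ ^ 2 / 2 := by
      rw [htdef, div_pow, Real.sq_sqrt (by norm_num : (0:ℝ) ≤ 2)]
    have hlt : ‖Z‖ ^ 2 < δ ^ 2 := by
      rw [hnormsq]
      have e1 : Z.re ^ 2 < t ^ 2 := by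
        rw [← sq_abs Z.re]
        exact pow_lt_pow_left₀ hre_lt (abs_nonneg _) (by norm_num)
      have e2 : Z.im ^ 2 < t ^ 2 := by
        rw [← sq_abs Z.im]
        exact pow_lt_pow_left₀ him_lt (abs_nonneg _) (by norm_num)
      rw [ht2] at e1 e2
      linarith
    have hge : δ ^ 2 < ‖Z‖ ^ 2 := by
      apply pow_lt_pow_left₀ hω hδ.le (by norm_num)
    linarith
  -- final exponent comparison
  set e2 : ℝ := ε ^ ((n : ℝ) / 2) with he2
  have hve2 : v * e2 = K * M ^ 2 := by
    rw [hvdef]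
    calc K * M ^ 2 * r * e2 = K * M ^ 2 * (r * e2) := by ring
    _ = K * M ^ 2 := by rw [he2, hrε, mul_one]
  have hbe2 : b * e2 = Kk * M := by
    rw [hbdef]
    calc r * Kk * M * e2 = Kk * M * (r * e2) := by ring
    _ = Kk * M := by rw [he2, hrε, mul_one]
  have htδ : t ≤ δ := by
    rw [htdef]
    apply div_le_self hδ.le
    rw [show (1:ℝ) = Real.sqrt 1 from (Real.sqrt_one).symm]
    exact Real.sqrt_le_sqrt (by norm_num)
  have ht2 : t ^ 2 = δ ^ 2 / 2 := by
    rw [htdef, div_pow, Real.sq_sqrt (by norm_num : (0:ℝ) ≤ 2)]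
  have hD1 : (0:ℝ) < 2 * (v + b * t / 3) := by positivity
  have hD2 : (0:ℝ) < 4 * M * (K * M + Kk * δ / 3) := by positivity
  have hexp : -(↑N * t ^ 2) / (2 * (v + b * t / 3))
      ≤ -(↑N * e2 * δ ^ 2) / (4 * M * (K * M + Kk * δ / 3)) := by
    rw [neg_div, neg_div, neg_le_neg_iff]
    rw [div_le_div_iff₀ hD2 hD1]
    have lhs_eq : (N:ℝ) * e2 * δ ^ 2 * (2 * (v + b * t / 3))
        = (N:ℝ) * δ ^ 2 * (2 * (v * e2) + 2 / 3 * ((b * e2) * t)) := by ring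
    have rhs_eq : (N:ℝ) * t ^ 2 * (4 * M * (K * M + Kk * δ / 3))
        = (N:ℝ) * (δ ^ 2 / 2) * (4 * M * (K * M + Kk * δ / 3)) := by rw [ht2]
    rw [lhs_eq, rhs_eq, hve2, hbe2]
    have hkey : (0:ℝ) ≤ (N:ℝ) * δ ^ 2 * (Kk * M) * (δ - t) := by
      apply mul_nonneg
      apply mul_nonneg (by positivity)
      positivity
      linarith
    nlinarith [hkey]
  have he2pos : (0:ℝ) < e2 := hε2
  -- put everything together
  have hfinal : ℙ {ω | δ < ‖(1 / (N : ℂ)) * (∑ j, W (X j ω)) - ∫ y, W y ∂μ‖}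
      ≤ ENNReal.ofReal (4 * Real.exp
          (-(N * e2 * δ ^ 2) / (4 * M * (K * M + Kk * δ / 3)))) := by
    calc ℙ {ω | δ < ‖(1 / (N : ℂ)) * (∑ j, W (X j ω)) - ∫ y, W y ∂μ‖}
        ≤ ℙ ({ω | (N:ℝ) * t ≤ |(∑ j, (gre ∘ X j) ω) - N * mre|}
          ∪ {ω | (N:ℝ) * t ≤ |(∑ j, (gim ∘ X j) ω) - N * mim|}) := measure_mono hsub
    _ ≤ ℙ {ω | (N:ℝ) * t ≤ |(∑ j, (gre ∘ X j) ω) - N * mre|}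
        + ℙ {ω | (N:ℝ) * t ≤ |(∑ j, (gim ∘ X j) ω) - N * mim|} := measure_union_le _ _
    _ ≤ ENNReal.ofReal (2 * Real.exp (-(N * t ^ 2) / (2 * (v + b * t / 3))))
        + ENNReal.ofReal (2 * Real.exp (-(N * t ^ 2) / (2 * (v + b * t / 3)))) :=
          add_le_add hre him
    _ = ENNReal.ofReal (4 * Real.exp (-(N * t ^ 2) / (2 * (v + b * t / 3)))) := by
        rw [← ENNReal.ofReal_add (by positivity) (by positivity)]
        ring_nf
    _ ≤ ENNReal.ofReal (4 * Real.exp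
          (-(N * e2 * δ ^ 2) / (4 * M * (K * M + Kk * δ / 3)))) := by
        apply ENNReal.ofReal_le_ofReal
        have := Real.exp_le_exp.2 hexp
        linarith
  exact hfinal
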